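/- arXiv:1211.1876 — 2 statements merged into one kernel-verified Lean document; each statement's English description precedes it below -/
import Mathlib

section
/- Let F be a field, G a finite group, V a G-module, and U a G-submodule of V. Then topdeg F[U]_G ≤ topdeg F[V]_G and dim_F F[U]_G ≤ dim_F F[V]_G. -/
open MvPolynomial

variable {F G ι : Type*} [Field F] [Group G] [Fintype ι] [DecidableEq ι]

/-- The (left) action of a group element `σ` on the polynomial algebra
`F[V] = S(V^*)` presented as `MvPolynomial ι F`, for a matrix representation
`ρ : G →* GL(ι, F)` of `G` on `V = (ι → F)`.  It is given by `σ • f = f ∘ σ⁻¹`,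
i.e. by linear substitution of the variables using the matrix of `ρ σ⁻¹`. -/
noncomputable def polyAct (ρ : G →* (Matrix ι ι F)ˣ) (σ : G)
    (f : MvPolynomial ι F) : MvPolynomial ι F :=
  MvPolynomial.aeval
    (fun i => ∑ j, ((ρ σ⁻¹ : Matrix ι ι F) i j) • (MvPolynomial.X j : MvPolynomial ι F)) f

/-- A polynomial is invariant if it is fixed by the action of every group element. -/
def IsInv (ρ : G →* (Matrix ι ι F)ˣ) (f : MvPolynomial ι F) : Prop :=
  ∀ σ : G, polyAct ρ σ f = f

/-- The Hilbert ideal: the ideal of `F[V]` generated by the homogeneous invariants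
of positive degree. -/
noncomputable def hilbertIdeal (ρ : G →* (Matrix ι ι F)ˣ) : Ideal (MvPolynomial ι F) :=
  Ideal.span {f : MvPolynomial ι F | (∃ d, 0 < d ∧ f.IsHomogeneous d) ∧ IsInv ρ f}

/-- The top degree of the coinvariant algebra `F[V]_G = F[V]/(Hilbert ideal)`:
the largest degree `d` such that the degree-`d` homogeneous component of `F[V]_G`
is nonzero; since the Hilbert ideal is homogeneous this is the largest `d` for
which some homogeneous polynomial of degree `d` is not in the Hilbert ideal. -/
noncomputable def topDeg (ρ : G →* (Matrix ι ι F)ˣ) : ℕ :=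
  sSup {d : ℕ | ∃ f : MvPolynomial ι F, f.IsHomogeneous d ∧ f ∉ hilbertIdeal ρ}

/-- The dimension of the coinvariant algebra `F[V]_G` as an `F`-vector space. -/
noncomputable def coinvDim (ρ : G →* (Matrix ι ι F)ˣ) : ℕ :=
  Module.finrank F (MvPolynomial ι F ⧸ hilbertIdeal ρ)


section PB


variable {F : Type*} [Field F]

/-- Pullback of a linear map between coordinate spaces, as an algebra hom on polynomials. -/
noncomputable def pb {ι κ : Type*} [Fintype ι] [DecidableEq ι] [Fintype κ]
    (ℓ : (ι → F) →ₗ[F] (κ → F)) : MvPolynomial κ F →ₐ[F] MvPolynomial ι F :=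
  aeval (fun k => ∑ i, ℓ (Pi.single i 1) k • (X i : MvPolynomial ι F))

variable {ι κ μ : Type*} [Fintype ι] [DecidableEq ι] [Fintype κ] [DecidableEq κ] [Fintype μ] [DecidableEq μ]

theorem pb_X (ℓ : (ι → F) →ₗ[F] (κ → F)) (k : κ) :
    pb ℓ (X k) = ∑ i, ℓ (Pi.single i 1) k • (X i : MvPolynomial ι F) :=
  aeval_X _ _

theorem pb_comp (ℓ₁ : (ι → F) →ₗ[F] (κ → F)) (ℓ₂ : (κ → F) →ₗ[F] (μ → F)) :
    pb (F := F) (ℓ₂.comp ℓ₁) = (pb ℓ₁).comp (pb ℓ₂) := by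
  apply MvPolynomial.algHom_ext
  intro m
  rw [AlgHom.comp_apply, pb_X, pb_X, map_sum]
  have : ∀ k : κ, pb ℓ₁ (ℓ₂ (Pi.single k 1) m • (X k : MvPolynomial κ F))
      = ∑ i, (ℓ₂ (Pi.single k 1) m * ℓ₁ (Pi.single i 1) k) • (X i : MvPolynomial ι F) := by
    intro k
    rw [map_smul, pb_X, Finset.smul_sum]
    simp [smul_smul]
  rw [Finset.sum_congr rfl fun k _ => this k, Finset.sum_comm]
  apply Finset.sum_congr rfl
  intro i _
  rw [← Finset.sum_smul]
  congr 1
  have : ℓ₁ (Pi.single i 1) = ∑ k, ℓ₁ (Pi.single i 1) k • (Pi.single k 1 : κ → F) := by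
    ext j; simp [Pi.single_apply]
  rw [LinearMap.comp_apply, this]
  simp only [map_sum, map_smul, Finset.sum_apply, Pi.smul_apply, smul_eq_mul]
  refine Finset.sum_congr rfl fun x _ => ?_
  rw [mul_comm]
  congr 1
  simp [Pi.single_apply]

theorem pb_id : pb (F := F) (LinearMap.id : (ι → F) →ₗ[F] (ι → F)) = AlgHom.id F _ := by
  apply MvPolynomial.algHom_ext
  intro i
  rw [pb_X]
  simp [Pi.single_apply]

end PB

section ACT


variable {F G ι : Type*} [Field F] [Group G] [Fintype ι] [DecidableEq ι]

theorem polyAct_eq_pb (ρ : G →* (Matrix ι ι F)ˣ) (σ : G) (f : MvPolynomial ι F) :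
    polyAct ρ σ f = pb ((ρ σ⁻¹ : Matrix ι ι F).mulVecLin) f := by
  unfold polyAct pb
  have : (fun i => ∑ j, ((ρ σ⁻¹ : Matrix ι ι F) i j) • (X j : MvPolynomial ι F))
      = fun k => ∑ i, ((ρ σ⁻¹ : Matrix ι ι F).mulVecLin (Pi.single i 1) k)
          • (X i : MvPolynomial ι F) := by
    funext i
    refine Finset.sum_congr rfl fun j _ => ?_
    congr 1
    simp [Matrix.mulVecLin_apply, Matrix.mulVec_single]
  rw [this]

theorem polyAct_one (ρ : G →* (Matrix ι ι F)ˣ) (f : MvPolynomial ι F) :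
    polyAct ρ 1 f = f := by
  rw [polyAct_eq_pb]
  have : ((ρ 1⁻¹ : (Matrix ι ι F)ˣ) : Matrix ι ι F).mulVecLin
      = (LinearMap.id : (ι → F) →ₗ[F] (ι → F)) := by
    simp [Matrix.mulVecLin_one]
  rw [this, pb_id]
  rfl

theorem polyAct_mul (ρ : G →* (Matrix ι ι F)ˣ) (σ τ : G) (f : MvPolynomial ι F) :
    polyAct ρ σ (polyAct ρ τ f) = polyAct ρ (σ * τ) f := by
  rw [polyAct_eq_pb, polyAct_eq_pb, polyAct_eq_pb]
  have : ((ρ (σ * τ)⁻¹ : (Matrix ι ι F)ˣ) : Matrix ι ι F).mulVecLin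
      = (((ρ τ⁻¹ : (Matrix ι ι F)ˣ) : Matrix ι ι F).mulVecLin).comp
        (((ρ σ⁻¹ : (Matrix ι ι F)ˣ) : Matrix ι ι F).mulVecLin) := by
    rw [← Matrix.mulVecLin_mul]
    congr 1
    rw [mul_inv_rev, map_mul]
    rfl
  rw [this, pb_comp]
  rfl

end ACT

section HOMOG

variable {F : Type*} [Field F] {ι κ : Type*} [Fintype ι] [DecidableEq ι] [Fintype κ]
  [DecidableEq κ]

theorem pb_arg_isHomogeneous (ℓ : (ι → F) →ₗ[F] (κ → F)) (k : κ) :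
    (pb ℓ (X k)).IsHomogeneous 1 := by
  rw [pb_X]
  refine MvPolynomial.IsHomogeneous.sum _ _ _ fun i _ => ?_
  rw [smul_eq_C_mul]
  exact MvPolynomial.isHomogeneous_C_mul_X _ _

theorem pb_isHomogeneous (ℓ : (ι → F) →ₗ[F] (κ → F)) {f : MvPolynomial κ F} {d : ℕ}
    (hf : f.IsHomogeneous d) : (pb ℓ f).IsHomogeneous d := by
  have h := hf.aeval (fun k => pb ℓ (X k)) (n := 1) (fun k => pb_arg_isHomogeneous ℓ k)
  rw [one_mul] at h
  have h2 : pb ℓ f = aeval (fun k => pb ℓ (X k)) f := by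
    have h3 : (fun k => pb ℓ (X k))
        = (fun k => ∑ i, ℓ (Pi.single i 1) k • (X i : MvPolynomial ι F)) :=
      funext fun k => by rw [pb_X]
    rw [h3]
    rfl
  rw [h2]
  exact h

theorem pb_homogeneousComponent (ℓ : (ι → F) →ₗ[F] (κ → F)) (d : ℕ) (f : MvPolynomial κ F) :
    homogeneousComponent d (pb ℓ f) = pb ℓ (homogeneousComponent d f) := by
  conv_lhs => rw [← MvPolynomial.sum_homogeneousComponent f]
  rw [map_sum, map_sum]
  have h1 : ∀ i, homogeneousComponent d (pb ℓ (homogeneousComponent i f))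
      = if d = i then pb ℓ (homogeneousComponent i f) else 0 := by
    intro i
    exact MvPolynomial.homogeneousComponent_of_mem
      ((mem_homogeneousSubmodule _ _).2
        (pb_isHomogeneous ℓ (homogeneousComponent_isHomogeneous i f)))
  rw [Finset.sum_congr rfl fun i _ => h1 i, Finset.sum_ite_eq _ d]
  split_ifs with h
  · rfl
  · rw [homogeneousComponent_eq_zero _ f (by simp only [Finset.mem_range, not_lt] at h; omega),
      map_zero]

end HOMOG

section HILB

variable {F G ι : Type*} [Field F] [Group G] [Fintype ι] [DecidableEq ι]

theorem coeff_prod_X_sub_C_homog {α : Type*} (a : α → MvPolynomial ι F)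
    (ha : ∀ σ, (a σ).IsHomogeneous 1) (s : Finset α) :
    ∀ i j : ℕ, i + j = s.card →
      ((∏ σ ∈ s, (Polynomial.X - Polynomial.C (a σ))).coeff i).IsHomogeneous j := by
  classical
  induction s using Finset.induction_on with
  | empty =>
    intro i j hij
    simp only [Finset.card_empty] at hij
    obtain ⟨rfl, rfl⟩ : i = 0 ∧ j = 0 := by omega
    simp only [Finset.prod_empty, Polynomial.coeff_one_zero]
    exact MvPolynomial.isHomogeneous_one _ _
  | insert σ₀ s' hσ ih =>
    intro i j hij
    rw [Finset.prod_insert hσ, Finset.card_insert_of_notMem hσ] at *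
    have hdegbound : (∏ σ ∈ s', (Polynomial.X - Polynomial.C (a σ))).natDegree ≤ s'.card := by
      refine le_trans (Polynomial.natDegree_prod_le _ _) ?_
      refine le_trans (Finset.sum_le_card_nsmul _ _ 1 fun σ _ => ?_) (by simp)
      exact le_of_eq (Polynomial.natDegree_X_sub_C _)
    have hexp : (Polynomial.X - Polynomial.C (a σ₀)) * ∏ σ ∈ s', (Polynomial.X - Polynomial.C (a σ))
        = Polynomial.X * (∏ σ ∈ s', (Polynomial.X - Polynomial.C (a σ)))
          - Polynomial.C (a σ₀) * (∏ σ ∈ s', (Polynomial.X - Polynomial.C (a σ))) := by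
      ring
    rw [hexp, Polynomial.coeff_sub, Polynomial.coeff_C_mul]
    set P := ∏ σ ∈ s', (Polynomial.X - Polynomial.C (a σ)) with hP
    cases i with
    | zero =>
      rw [Polynomial.mul_coeff_zero, Polynomial.coeff_X_zero, zero_mul, zero_sub]
      refine MvPolynomial.IsHomogeneous.neg ?_
      have h0 : P.coeff 0 |>.IsHomogeneous s'.card := ih 0 s'.card (by omega)
      have := (ha σ₀).mul h0
      rwa [show j = 1 + s'.card by omega]
    | succ m =>
      rw [Polynomial.coeff_X_mul]
      rcases Nat.eq_or_lt_of_le (Nat.zero_le j) with hj0 | hjpos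
      · -- j = 0, so m = s'.card
        have hm : m = s'.card := by omega
        have hc : P.coeff (m + 1) = 0 :=
          Polynomial.coeff_eq_zero_of_natDegree_lt (by omega)
        rw [hc, mul_zero, sub_zero]
        exact ih m j (by omega)
      · refine (ih m j (by omega)).sub ?_
        have h1 : (P.coeff (m + 1)).IsHomogeneous (j - 1) := ih (m + 1) (j - 1) (by omega)
        have := (ha σ₀).mul h1
        rwa [show j = 1 + (j - 1) by omega]

theorem X_pow_card_mem_hilbertIdeal [Fintype G] (ρ : G →* (Matrix ι ι F)ˣ) (k : ι) :
    (X k : MvPolynomial ι F) ^ (Fintype.card G) ∈ hilbertIdeal ρ := by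
  classical
  set n := Fintype.card G with hn
  set a : G → MvPolynomial ι F := fun σ => polyAct ρ σ (X k) with ha
  have ha1 : ∀ σ, (a σ).IsHomogeneous 1 := by
    intro σ
    show (polyAct ρ σ (X k)).IsHomogeneous 1
    rw [polyAct_eq_pb]
    exact pb_arg_isHomogeneous _ _
  set Q : Polynomial (MvPolynomial ι F) :=
    ∏ σ : G, (Polynomial.X - Polynomial.C (a σ)) with hQ
  have hmonic : Q.Monic :=
    Polynomial.monic_prod_of_monic _ _ fun σ _ => Polynomial.monic_X_sub_C _
  have hdeg : Q.natDegree = n := by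
    rw [hQ, Polynomial.natDegree_prod_of_monic _ _ fun σ _ => Polynomial.monic_X_sub_C _]
    simp [hn]
  have heval : Polynomial.eval (X k : MvPolynomial ι F) Q = 0 := by
    rw [hQ, Polynomial.eval_prod]
    refine Finset.prod_eq_zero (Finset.mem_univ (1 : G)) ?_
    simp [ha, polyAct_one]
  -- invariance of the coefficients
  have hinv : ∀ i : ℕ, IsInv ρ (Q.coeff i) := by
    intro i τ
    have hmapQ : Q.map ((pb ((ρ τ⁻¹ : Matrix ι ι F).mulVecLin)).toRingHom) = Q := by
      rw [hQ, Polynomial.map_prod]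
      have hfac : ∀ σ : G, (Polynomial.X - Polynomial.C (a σ)).map
          ((pb ((ρ τ⁻¹ : Matrix ι ι F).mulVecLin)).toRingHom)
          = Polynomial.X - Polynomial.C (a (τ * σ)) := by
        intro σ
        rw [Polynomial.map_sub, Polynomial.map_X, Polynomial.map_C]
        have e1 : (pb ((ρ τ⁻¹ : Matrix ι ι F).mulVecLin)).toRingHom (a σ) = a (τ * σ) := by
          have e2 : (pb ((ρ τ⁻¹ : Matrix ι ι F).mulVecLin)) (a σ) = polyAct ρ τ (a σ) :=
            (polyAct_eq_pb _ _ _).symm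
          show (pb ((ρ τ⁻¹ : Matrix ι ι F).mulVecLin)) (a σ) = a (τ * σ)
          rw [e2]
          show polyAct ρ τ (polyAct ρ σ (X k)) = polyAct ρ (τ * σ) (X k)
          rw [polyAct_mul]
        rw [e1]
      rw [Finset.prod_congr rfl fun σ _ => hfac σ]
      exact Fintype.prod_equiv (Equiv.mulLeft τ) _ _ fun σ => rfl
    calc polyAct ρ τ (Q.coeff i)
        = (Q.map ((pb ((ρ τ⁻¹ : Matrix ι ι F).mulVecLin)).toRingHom)).coeff i := by
          rw [Polynomial.coeff_map, polyAct_eq_pb]; rfl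
      _ = Q.coeff i := by rw [hmapQ]
  -- coefficients in low degree lie in the Hilbert ideal
  have hcoeff_mem : ∀ i : ℕ, i < n → Q.coeff i ∈ hilbertIdeal ρ := by
    intro i hi
    refine Ideal.subset_span ⟨⟨n - i, by omega, ?_⟩, hinv i⟩
    have := coeff_prod_X_sub_C_homog a ha1 Finset.univ i (n - i) (by simp [hn]; omega)
    exact this
  -- the relation
  have hrel : (X k : MvPolynomial ι F) ^ n = - ∑ i ∈ Finset.range n, Q.coeff i * (X k) ^ i := by
    have h0 := Polynomial.eval_eq_sum_range (p := Q) (X k : MvPolynomial ι F)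
    have h1 : Q.coeff Q.natDegree = 1 := hmonic.coeff_natDegree
    rw [hdeg] at h0 h1
    rw [heval, Finset.sum_range_succ, h1, one_mul] at h0
    linear_combination -h0
  rw [hn] at hrel ⊢
  rw [hrel]
  refine neg_mem (Ideal.sum_mem _ fun i hi => ?_)
  exact Ideal.mul_mem_right _ _ (hcoeff_mem i (Finset.mem_range.mp hi))

end HILB

section MAIN

variable {F G ι : Type*} [Field F] [Group G] [Fintype ι] [DecidableEq ι]

theorem monomial_mem_hilbertIdeal [Fintype G] (ρ : G →* (Matrix ι ι F)ˣ)
    {m : ι →₀ ℕ} {k : ι} (hk : Fintype.card G ≤ m k) (c : F) :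
    (monomial m c : MvPolynomial ι F) ∈ hilbertIdeal ρ := by
  have hle : Finsupp.single k (Fintype.card G) ≤ m := Finsupp.single_le_iff.mpr hk
  have : (monomial m c : MvPolynomial ι F)
      = monomial (m - Finsupp.single k (Fintype.card G)) c * (X k) ^ (Fintype.card G) := by
    rw [X_pow_eq_monomial, monomial_mul, mul_one, tsub_add_cancel_of_le hle]
  rw [this]
  exact Ideal.mul_mem_left _ _ (X_pow_card_mem_hilbertIdeal ρ k)

theorem homog_mem_hilbertIdeal_of_large [Fintype G] (ρ : G →* (Matrix ι ι F)ˣ)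
    {f : MvPolynomial ι F} {d : ℕ} (hf : f.IsHomogeneous d)
    (hd : Fintype.card ι * (Fintype.card G - 1) < d) :
    f ∈ hilbertIdeal ρ := by
  rw [f.as_sum]
  refine Ideal.sum_mem _ fun m hm => ?_
  have hdm : m.degree = d := by
    rw [Finsupp.degree_eq_weight_one]
    exact hf (MvPolynomial.mem_support_iff.mp hm)
  have : ∃ k, Fintype.card G ≤ m k := by
    by_contra hcon
    push_neg at hcon
    have hsum : m.degree ≤ Fintype.card ι * (Fintype.card G - 1) := by
      calc m.degree = ∑ i ∈ m.support, m i := rfl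
        _ ≤ ∑ i : ι, m i := Finset.sum_le_sum_of_subset (Finset.subset_univ _)
        _ ≤ ∑ _i : ι, (Fintype.card G - 1) :=
            Finset.sum_le_sum fun i _ => by have := hcon i; omega
        _ = Fintype.card ι * (Fintype.card G - 1) := by
            rw [Finset.sum_const, Finset.card_univ, smul_eq_mul]
    omega
  obtain ⟨k, hk⟩ := this
  exact monomial_mem_hilbertIdeal ρ hk _

theorem bddAbove_topDeg_set [Fintype G] (ρ : G →* (Matrix ι ι F)ˣ) :
    BddAbove {d : ℕ | ∃ f : MvPolynomial ι F, f.IsHomogeneous d ∧ f ∉ hilbertIdeal ρ} := by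
  refine ⟨Fintype.card ι * (Fintype.card G - 1), fun d hd => ?_⟩
  obtain ⟨f, hf, hnot⟩ := hd
  by_contra hcon
  exact hnot (homog_mem_hilbertIdeal_of_large ρ hf (by omega))

end MAIN

section FIN

variable {F G ι : Type*} [Field F] [Group G] [Fintype ι] [DecidableEq ι]

theorem hilbert_quotient_finite [Fintype G] (ρ : G →* (Matrix ι ι F)ˣ) :
    Module.Finite F (MvPolynomial ι F ⧸ hilbertIdeal ρ) := by
  classical
  set n := Fintype.card G with hn
  set θ : (ι → Fin (n + 1)) → (MvPolynomial ι F ⧸ hilbertIdeal ρ) := fun f =>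
    Ideal.Quotient.mkₐ F (hilbertIdeal ρ)
      (monomial (Finsupp.equivFunOnFinite.symm fun k => (f k : ℕ)) 1) with hθ
  have hspan : Submodule.span F (Set.range θ) = ⊤ := by
    rw [eq_top_iff]
    rintro q -
    obtain ⟨p, rfl⟩ := Ideal.Quotient.mkₐ_surjective F (hilbertIdeal ρ) q
    induction p using MvPolynomial.induction_on' with
    | add p q hp hq =>
      rw [map_add]
      exact Submodule.add_mem _ hp hq
    | monomial m c =>
      by_cases hc : ∃ k, n ≤ m k
      · obtain ⟨k, hk⟩ := hc
        have : Ideal.Quotient.mkₐ F (hilbertIdeal ρ) (monomial m c) = 0 := by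
          rw [Ideal.Quotient.mkₐ_eq_mk, Ideal.Quotient.eq_zero_iff_mem]
          exact monomial_mem_hilbertIdeal ρ hk c
        rw [this]
        exact Submodule.zero_mem _
      · push_neg at hc
        have h1 : (monomial m c : MvPolynomial ι F) = c • monomial m 1 := by
          rw [MvPolynomial.smul_monomial, smul_eq_mul, mul_one]
        rw [h1, map_smul]
        refine Submodule.smul_mem _ c (Submodule.subset_span ?_)
        refine ⟨fun k => ⟨m k, by have := hc k; omega⟩, ?_⟩
        rw [hθ]
        have hm : (Finsupp.equivFunOnFinite.symm
            fun k => ((⟨m k, by have := hc k; omega⟩ : Fin (n + 1)) : ℕ)) = m := by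
          ext k; simp
        simp only [hm]
  refine Module.Finite.of_fg_top ?_
  rw [Submodule.fg_def]
  exact ⟨Set.range θ, Set.finite_range θ, hspan⟩

end FIN

theorem topDeg_submodule_le' {F G ι : Type*} [Field F] [Group G] [Fintype ι] [DecidableEq ι]
    [Fintype G] {κ : Type*} [Fintype κ] [DecidableEq κ]
    (ρU : G →* (Matrix ι ι F)ˣ) (ρV : G →* (Matrix κ κ F)ˣ)
    (φ : (ι → F) →ₗ[F] (κ → F)) (hinj : Function.Injective φ)
    (hequiv : ∀ (σ : G) (v : ι → F),
      φ ((ρU σ : Matrix ι ι F).mulVec v) = (ρV σ : Matrix κ κ F).mulVec (φ v)) :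
    topDeg ρU ≤ topDeg ρV ∧ coinvDim ρU ≤ coinvDim ρV := by
  classical
  -- equivariance of the pullback
  have hcomm : ∀ (σ : G) (p : MvPolynomial κ F),
      pb φ (polyAct ρV σ p) = polyAct ρU σ (pb φ p) := by
    intro σ p
    rw [polyAct_eq_pb, polyAct_eq_pb]
    have hℓ : (((ρV σ⁻¹ : (Matrix κ κ F)ˣ) : Matrix κ κ F).mulVecLin).comp φ
        = φ.comp (((ρU σ⁻¹ : (Matrix ι ι F)ˣ) : Matrix ι ι F).mulVecLin) :=
      LinearMap.ext fun v => (hequiv σ⁻¹ v).symm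
    have h1 := congrArg (fun (ψ : MvPolynomial κ F →ₐ[F] MvPolynomial ι F) => ψ p)
      (pb_comp φ (((ρV σ⁻¹ : (Matrix κ κ F)ˣ) : Matrix κ κ F).mulVecLin))
    have h2 := congrArg (fun (ψ : MvPolynomial κ F →ₐ[F] MvPolynomial ι F) => ψ p)
      (pb_comp (((ρU σ⁻¹ : (Matrix ι ι F)ˣ) : Matrix ι ι F).mulVecLin) φ)
    simp only [AlgHom.comp_apply] at h1 h2
    rw [← h1, hℓ, h2]
  -- the pullback maps the Hilbert ideal into the Hilbert ideal
  have hmap : ∀ p ∈ hilbertIdeal ρV, pb φ p ∈ hilbertIdeal ρU := by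
    intro p hp
    have hle : Ideal.map (pb φ) (hilbertIdeal ρV) ≤ hilbertIdeal ρU := by
      rw [hilbertIdeal, Ideal.map_span]
      refine Ideal.span_le.mpr ?_
      rintro q ⟨f, ⟨⟨d, hd, hhom⟩, hinvf⟩, rfl⟩
      exact Ideal.subset_span
        ⟨⟨d, hd, pb_isHomogeneous φ hhom⟩, fun σ => by rw [← hcomm σ f, hinvf σ]⟩
    exact hle (Ideal.mem_map_of_mem _ hp)
  -- the pullback is surjective
  obtain ⟨g, hg⟩ := φ.exists_leftInverse_of_injective (LinearMap.ker_eq_bot.mpr hinj)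
  have hsurj : Function.Surjective (pb φ : MvPolynomial κ F →ₐ[F] MvPolynomial ι F) := by
    intro f
    refine ⟨pb g f, ?_⟩
    have h1 := congrArg (fun (ψ : MvPolynomial ι F →ₐ[F] MvPolynomial ι F) => ψ f)
      (pb_comp φ g)
    simp only [AlgHom.comp_apply] at h1
    rw [← h1, hg, pb_id]
    rfl
  constructor
  · -- topDeg
    have hsub : {d : ℕ | ∃ f : MvPolynomial ι F, f.IsHomogeneous d ∧ f ∉ hilbertIdeal ρU}
        ⊆ {d : ℕ | ∃ f : MvPolynomial κ F, f.IsHomogeneous d ∧ f ∉ hilbertIdeal ρV} := by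
      rintro d ⟨f, hfhom, hfnot⟩
      obtain ⟨p, hp⟩ := hsurj f
      refine ⟨homogeneousComponent d p, homogeneousComponent_isHomogeneous d p, fun hmem => ?_⟩
      have hgf : pb φ (homogeneousComponent d p) = f := by
        rw [← pb_homogeneousComponent, hp,
          homogeneousComponent_of_mem ((mem_homogeneousSubmodule _ _).2 hfhom), if_pos rfl]
      exact hfnot (hgf ▸ hmap _ hmem)
    rw [topDeg, topDeg]
    rcases Set.eq_empty_or_nonempty
      {d : ℕ | ∃ f : MvPolynomial ι F, f.IsHomogeneous d ∧ f ∉ hilbertIdeal ρU} with he | hne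
    · rw [he, csSup_empty]
      exact Nat.zero_le _
    · exact csSup_le_csSup (bddAbove_topDeg_set ρV) hne hsub
  · -- coinvDim
    have hfinV : Module.Finite F (MvPolynomial κ F ⧸ hilbertIdeal ρV) :=
      hilbert_quotient_finite ρV
    set π : (MvPolynomial κ F ⧸ hilbertIdeal ρV) →ₐ[F] (MvPolynomial ι F ⧸ hilbertIdeal ρU) :=
      Ideal.Quotient.liftₐ (hilbertIdeal ρV)
        ((Ideal.Quotient.mkₐ F (hilbertIdeal ρU)).comp (pb φ))
        (fun p hp => by
          rw [AlgHom.comp_apply, Ideal.Quotient.mkₐ_eq_mk, Ideal.Quotient.eq_zero_iff_mem]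
          exact hmap p hp) with hπ
    have hπsurj : Function.Surjective π := by
      intro q
      obtain ⟨p, rfl⟩ := Ideal.Quotient.mkₐ_surjective F (hilbertIdeal ρU) q
      obtain ⟨r, hr⟩ := hsurj p
      refine ⟨Ideal.Quotient.mkₐ F (hilbertIdeal ρV) r, ?_⟩
      rw [Ideal.Quotient.mkₐ_eq_mk, Ideal.Quotient.liftₐ_apply]
      show (Ideal.Quotient.mkₐ F (hilbertIdeal ρU)) (pb φ r) = _
      rw [hr]
    rw [coinvDim, coinvDim]
    have h1 : Module.finrank F (MvPolynomial ι F ⧸ hilbertIdeal ρU)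
        = Module.finrank F (LinearMap.range π.toLinearMap) := by
      have hπsurj' : Function.Surjective π.toLinearMap := hπsurj
      rw [LinearMap.range_eq_top.mpr hπsurj', finrank_top]
    rw [h1]
    exact LinearMap.finrank_range_le _

/-- If `U` is a `G`-submodule of `V` (expressed by a `G`-equivariant
linear embedding `φ : U → V`), then `topdeg F[U]_G ≤ topdeg F[V]_G` and
`dim_F F[U]_G ≤ dim_F F[V]_G`. -/
theorem topDeg_submodule_le [Fintype G] {κ : Type*} [Fintype κ] [DecidableEq κ]
    (ρU : G →* (Matrix ι ι F)ˣ) (ρV : G →* (Matrix κ κ F)ˣ)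
    (φ : (ι → F) →ₗ[F] (κ → F)) (hinj : Function.Injective φ)
    (hequiv : ∀ (σ : G) (v : ι → F),
      φ ((ρU σ : Matrix ι ι F).mulVec v) = (ρV σ : Matrix κ κ F).mulVec (φ v)) :
    topDeg ρU ≤ topDeg ρV ∧ coinvDim ρU ≤ coinvDim ρV :=
  topDeg_submodule_le' ρU ρV φ hinj hequiv
end

section
/- Let F be a field of characteristic p > 0, G a finite group with p dividing |G|, and V a faithful G-module. Then the top degree of the vector coinvariants grows unboundedly: lim_{m→∞} topdeg F[V^m]_G = ∞. -/
open MvPolynomial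

variable {F G ι : Type*} [Field F] [Group G] [Fintype ι] [DecidableEq ι]

/-- The representation of `G` on the direct sum `V^m` of `m` copies of `V`,
given by block diagonal matrices. -/
noncomputable def glPow (ρ : G →* (Matrix ι ι F)ˣ) (m : ℕ) :
    G →* (Matrix (ι × Fin m) (ι × Fin m) F)ˣ :=
  (Units.map (Matrix.blockDiagonalRingHom ι (Fin m) F).toMonoidHom).comp
    ((Units.map (Pi.constRingHom (Fin m) (Matrix ι ι F)).toMonoidHom).comp ρ)

/-! ### Auxiliary material -/

set_option linter.unusedSectionVars false
set_option maxHeartbeats 1000000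

section AuxA
variable {F' : Type*} [CommRing F'] {κ : Type*}

lemma pderiv_none_rename (q : MvPolynomial κ F') :
    pderiv (none : Option κ) (rename some q) = 0 := by
  induction q using MvPolynomial.induction_on with
  | C r => simp
  | add f g hf hg => simp [hf, hg]
  | mul_X f i hf => simp [hf, pderiv_X]

end AuxA

section Key
variable {F' : Type*} [CommRing F'] {τ κ : Type*} [Fintype τ] [DecidableEq τ] [DecidableEq κ]

noncomputable def substM (M : Matrix τ τ F') : MvPolynomial τ F' →ₐ[F'] MvPolynomial τ F' :=
  aeval (fun v => ∑ w, M v w • X w)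

noncomputable def piZero : MvPolynomial (Option κ) F' →ₐ[F'] MvPolynomial κ F' :=
  aeval (fun o => o.elim 0 X)

noncomputable def psiMap (b : τ → MvPolynomial κ F') (c : τ → F') :
    MvPolynomial τ F' →ₐ[F'] MvPolynomial (Option κ) F' :=
  aeval (fun v => rename some (b v) + C (c v) * X none)

lemma substM_X (M : Matrix τ τ F') (v : τ) : substM M (X v) = ∑ w, M v w • X w := by
  simp [substM]

lemma psiMap_X (b : τ → MvPolynomial κ F') (c : τ → F') (v : τ) :
    psiMap b c (X v) = rename some (b v) + C (c v) * X none := by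
  simp [psiMap]

lemma piZero_rename (q : MvPolynomial κ F') :
    (piZero : MvPolynomial (Option κ) F' →ₐ[F'] MvPolynomial κ F') (rename some q) = q := by
  show (aeval fun o => Option.elim o (0 : MvPolynomial κ F') X) ((rename some) q) = q
  rw [aeval_rename]
  have h2 : (fun o => Option.elim o (0 : MvPolynomial κ F') X) ∘ some = X := rfl
  rw [h2, aeval_X_left_apply]

lemma piZero_C (r : F') :
    (piZero : MvPolynomial (Option κ) F' →ₐ[F'] MvPolynomial κ F') (C r) = C r := by
  simp [piZero]

lemma piZero_Xnone :
    (piZero : MvPolynomial (Option κ) F' →ₐ[F'] MvPolynomial κ F') (X none) = 0 := by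
  simp [piZero]

lemma piZero_psiMap (b : τ → MvPolynomial κ F') (c : τ → F') (f : MvPolynomial τ F') :
    piZero (psiMap b c f) = aeval b f := by
  have : (piZero.comp (psiMap b c) : MvPolynomial τ F' →ₐ[F'] MvPolynomial κ F') = aeval b := by
    apply MvPolynomial.algHom_ext
    intro v
    rw [AlgHom.comp_apply, psiMap_X, map_add, map_mul, piZero_rename, piZero_Xnone,
      mul_zero, add_zero, aeval_X]
  exact DFunLike.congr_fun this f

lemma pderiv_none_psiMap_X (b : τ → MvPolynomial κ F') (c : τ → F') (v : τ) :
    pderiv (none : Option κ) (psiMap b c (X v)) = C (c v) := by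
  simp [psiMap_X, pderiv_none_rename, pderiv_X]

lemma aeval_substM (M : Matrix τ τ F') (b : τ → MvPolynomial κ F')
    (H1 : ∀ v, ∑ w, M v w • b w = b v) (f : MvPolynomial τ F') :
    aeval b (substM M f) = aeval b f := by
  have : ((aeval b).comp (substM M) : MvPolynomial τ F' →ₐ[F'] MvPolynomial κ F') = aeval b := by
    apply MvPolynomial.algHom_ext
    intro v
    simp [substM, H1 v]
  exact DFunLike.congr_fun this f

lemma key_ind (M : Matrix τ τ F') (b : τ → MvPolynomial κ F') (c : τ → F') (k₀ : κ)
    (H1 : ∀ v, ∑ w, M v w • b w = b v)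
    (H2 : ∀ v, (C (∑ w, M v w * c w) : MvPolynomial κ F') = C (c v) + pderiv k₀ (b v))
    (f : MvPolynomial τ F') :
    piZero (pderiv (none : Option κ) (psiMap b c (substM M f))) =
      piZero (pderiv (none : Option κ) (psiMap b c f)) + pderiv k₀ (aeval b f) := by
  have hDSX : ∀ v : τ, piZero (pderiv (none : Option κ) (psiMap b c (substM M (X v))))
      = C (c v) + pderiv k₀ (b v) := by
    intro v
    have hsum : piZero (pderiv (none : Option κ) (psiMap b c (∑ w, M v w • X w)))
        = ∑ w, (C (M v w * c w) : MvPolynomial κ F') := by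
      rw [map_sum, map_sum, map_sum]
      refine Finset.sum_congr rfl (fun w _ => ?_)
      rw [map_smul, Derivation.map_smul, pderiv_none_psiMap_X, map_smul, piZero_C,
        smul_eq_C_mul, ← C_mul]
    rw [substM_X, hsum, ← map_sum, H2 v]
  have lb : ∀ (x y : MvPolynomial τ F'),
      piZero (pderiv (none : Option κ) (psiMap b c (x * y))) =
        aeval b x * piZero (pderiv (none : Option κ) (psiMap b c y)) +
          aeval b y * piZero (pderiv (none : Option κ) (psiMap b c x)) := by
    intro x y
    rw [map_mul, pderiv_mul, map_add, map_mul, map_mul, piZero_psiMap, piZero_psiMap]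
    ring
  induction f using MvPolynomial.induction_on with
  | C r =>
      have e1 : substM M (C r : MvPolynomial τ F') = C r := by
        simp [substM]
      rw [e1]
      have e2 : psiMap b c (C r : MvPolynomial τ F') = C r := by simp [psiMap]
      rw [e2]
      simp
  | add f g hf hg =>
      simp only [map_add, Derivation.map_add, hf, hg]
      ring
  | mul_X f v hf =>
      rw [map_mul, lb, lb, aeval_substM M b H1, hf, hDSX, pderiv_none_psiMap_X,
        aeval_substM M b H1]
      rw [map_mul, pderiv_mul]
      simp only [aeval_X, piZero_C]
      ring

lemma key_fixed (M : Matrix τ τ F') (b : τ → MvPolynomial κ F') (c : τ → F') (k₀ : κ)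
    (H1 : ∀ v, ∑ w, M v w • b w = b v)
    (H2 : ∀ v, (C (∑ w, M v w * c w) : MvPolynomial κ F') = C (c v) + pderiv k₀ (b v))
    (f : MvPolynomial τ F') (hf : substM M f = f) :
    pderiv k₀ (aeval b f) = 0 := by
  have h := key_ind M b c k₀ H1 H2 f
  rw [hf] at h
  exact (left_eq_add.mp h)

end Key

section Div
variable {F' : Type*} [Field F'] {κ : Type*} [DecidableEq κ]

lemma dvd_of_pderiv_zero (p : ℕ) [CharP F' p] (R : MvPolynomial κ F') (k : κ)
    (h : pderiv k R = 0) (a : κ →₀ ℕ) (ha : a ∈ R.support) : p ∣ a k := by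
  by_cases h0 : a k = 0
  · simp [h0]
  have hrep := support_sum_monomial_coeff R
  have hd : pderiv k R = ∑ a' ∈ R.support, monomial (a' - Finsupp.single k 1)
      (coeff a' R * (a' k : F')) := by
    conv_lhs => rw [← hrep]
    rw [map_sum]
    exact Finset.sum_congr rfl (fun a' _ => pderiv_monomial)
  have hco : coeff (a - Finsupp.single k 1) (pderiv k R) = coeff a R * (a k : F') := by
    rw [hd, coeff_sum]
    rw [Finset.sum_eq_single a]
    · rw [coeff_monomial, if_pos rfl]
    · intro a' ha' hne
      rw [coeff_monomial]
      by_cases hz : a' k = 0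
      · simp [hz]
      · rw [if_neg]
        intro heq
        apply hne
        ext j
        have hj := DFunLike.congr_fun heq j
        rw [Finsupp.tsub_apply, Finsupp.tsub_apply] at hj
        by_cases hjk : j = k
        · subst hjk
          simp only [Finsupp.single_eq_same] at hj
          omega
        · simpa [Finsupp.single_eq_of_ne' (Ne.symm hjk)] using hj
    · intro hnot
      exact absurd ha hnot
  rw [h, coeff_zero] at hco
  have : (↑(a k) : F') = 0 := by
    rcases mul_eq_zero.mp hco.symm with h1 | h1
    · exact absurd h1 (by simpa using ha)
    · exact h1
  exact (CharP.cast_eq_zero_iff F' p _).mp this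

lemma mem_span_Xpow (p : ℕ) (R : MvPolynomial κ F')
    (h : ∀ a ∈ R.support, ∃ k, p ≤ a k) :
    R ∈ Ideal.span (Set.range fun k : κ => (X k : MvPolynomial κ F') ^ p) := by
  rw [← support_sum_monomial_coeff R]
  apply Ideal.sum_mem
  intro a ha
  obtain ⟨k, hk⟩ := h a ha
  have hfix : (a - Finsupp.single k p) + Finsupp.single k p = a := by
    ext j
    rw [Finsupp.add_apply, Finsupp.tsub_apply]
    by_cases hjk : j = k
    · subst hjk; simp only [Finsupp.single_eq_same]; omega
    · simp [Finsupp.single_eq_of_ne' (Ne.symm hjk)]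
  have hmono : (monomial a (coeff a R) : MvPolynomial κ F') =
      monomial (a - Finsupp.single k p) (coeff a R) * (X k) ^ p := by
    rw [X_pow_eq_monomial, monomial_mul, mul_one, hfix]
  rw [hmono]
  exact Ideal.mul_mem_left _ _ (Ideal.subset_span ⟨k, rfl⟩)

lemma monomial_not_mem_span_Xpow [Fintype κ] (p : ℕ) (b : κ →₀ ℕ) (hb : ∀ k, b k < p)
    (c : F') (hc : c ≠ 0) :
    (monomial b c : MvPolynomial κ F') ∉
      Ideal.span (Set.range fun k : κ => (X k : MvPolynomial κ F') ^ p) := by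
  intro hmem
  rw [Ideal.mem_span_range_iff_exists_fun] at hmem
  obtain ⟨f, hf⟩ := hmem
  have := congrArg (coeff b) hf
  rw [coeff_sum] at this
  have hz : ∀ k ∈ Finset.univ, coeff b (f k * (X k : MvPolynomial κ F') ^ p) = 0 := by
    intro k _
    rw [X_pow_eq_monomial, coeff_mul_monomial', if_neg]
    rw [Finsupp.single_le_iff]
    exact fun hle => absurd (hb k) (not_lt.mpr hle)
  rw [Finset.sum_congr rfl hz, Finset.sum_const_zero, coeff_monomial, if_pos rfl] at this
  exact hc this.symm

lemma prod_X_pow_eq_monomial' (s : Finset κ) (q : ℕ) :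
    ∏ k ∈ s, (X k : MvPolynomial κ F') ^ q
      = monomial (∑ k ∈ s, Finsupp.single k q) 1 := by
  induction s using Finset.induction_on with
  | empty => simp
  | insert _ _ h ih =>
      rw [Finset.prod_insert h, ih, Finset.sum_insert h, X_pow_eq_monomial, monomial_mul, one_mul]

end Div

section Act
variable {τ : Type*} [Fintype τ] [DecidableEq τ] (ρ : G →* (Matrix τ τ F)ˣ)

noncomputable def actA (σ : G) : MvPolynomial τ F →ₐ[F] MvPolynomial τ F :=
  aeval (fun i => ∑ j, ((ρ σ⁻¹ : Matrix τ τ F) i j) • (X j : MvPolynomial τ F))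

lemma polyAct_eq_actA (σ : G) (f : MvPolynomial τ F) : polyAct ρ σ f = actA ρ σ f := rfl

lemma actA_comp (σ τ' : G) : (actA ρ σ).comp (actA ρ τ') = actA ρ (σ * τ') := by
  apply MvPolynomial.algHom_ext
  intro v
  simp only [AlgHom.comp_apply, actA, aeval_X]
  rw [map_sum]
  simp_rw [map_smul, aeval_X, Finset.smul_sum, smul_smul]
  rw [Finset.sum_comm]
  simp_rw [← Finset.sum_smul, ← Matrix.mul_apply]
  have : (ρ τ'⁻¹ : Matrix τ τ F) * (ρ σ⁻¹ : Matrix τ τ F) = (ρ (σ * τ')⁻¹ : Matrix τ τ F) := by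
    rw [← Units.val_mul, ← map_mul, mul_inv_rev]
  rw [this]

lemma actA_one : actA (F := F) ρ 1 = AlgHom.id F (MvPolynomial τ F) := by
  apply MvPolynomial.algHom_ext
  intro v
  simp only [actA, aeval_X, inv_one, map_one, AlgHom.id_apply]
  rw [Finset.sum_eq_single v]
  · simp [Matrix.one_apply]
  · intro w _ hw
    simp [Matrix.one_apply, Ne.symm hw]
  · simp

lemma actA_X_isHomogeneous (σ : G) (v : τ) :
    (actA ρ σ (X v) : MvPolynomial τ F).IsHomogeneous 1 := by
  rw [actA, aeval_X]
  apply MvPolynomial.IsHomogeneous.sum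
  intro j _
  rw [smul_eq_C_mul]
  exact (isHomogeneous_X F j).C_mul _

end Act

section UB
variable {τ : Type*} [Fintype τ] [DecidableEq τ] (ρ : G →* (Matrix τ τ F)ˣ) [Fintype G]

lemma coeff_prod_isInv (v : τ) (i : ℕ) :
    IsInv ρ ((∏ σ : G, (Polynomial.X - Polynomial.C (actA ρ σ (X v)))).coeff i) := by
  intro σ0
  rw [polyAct_eq_actA]
  set Q : Polynomial (MvPolynomial τ F) := ∏ σ : G, (Polynomial.X - Polynomial.C (actA ρ σ (X v)))
    with hQ
  have hmap : Q.map (actA ρ σ0 : MvPolynomial τ F →ₐ[F] MvPolynomial τ F).toRingHom = Q := by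
    rw [hQ, Polynomial.map_prod]
    have h1 : ∀ σ : G, (Polynomial.X - Polynomial.C (actA ρ σ (X v))).map
        (actA ρ σ0 : MvPolynomial τ F →ₐ[F] MvPolynomial τ F).toRingHom
        = Polynomial.X - Polynomial.C (actA ρ (σ0 * σ) (X v)) := by
      intro σ
      rw [Polynomial.map_sub, Polynomial.map_X, Polynomial.map_C]
      congr 1
      congr 1
      exact DFunLike.congr_fun (actA_comp ρ σ0 σ) (X v)
    simp_rw [h1]
    exact Equiv.prod_comp (Equiv.mulLeft σ0) (fun σ => Polynomial.X -
      Polynomial.C (actA ρ σ (X v)))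
  conv_rhs => rw [← hmap]
  rw [Polynomial.coeff_map]
  rfl

lemma coeff_prod_isHomogeneous (v : τ) (i : ℕ) (hi : i ≤ Fintype.card G) :
    ((∏ σ : G, (Polynomial.X - Polynomial.C (actA ρ σ (X v)))).coeff i).IsHomogeneous
      (Fintype.card G - i) := by
  have hrw : ∀ σ : G, Polynomial.X - Polynomial.C (actA ρ σ (X v))
      = Polynomial.X + Polynomial.C (- actA ρ σ (X v)) := by
    intro σ; rw [map_neg, sub_eq_add_neg]
  simp_rw [hrw]
  rw [Finset.prod_X_add_C_coeff _ _ (by simpa using hi)]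
  apply MvPolynomial.IsHomogeneous.sum
  intro t ht
  have htc : t.card = Fintype.card G - i := by
    simpa using (Finset.mem_powersetCard.mp ht).2
  have := MvPolynomial.IsHomogeneous.prod t (fun σ => - actA ρ σ (X v)) (fun _ => 1)
    (fun σ _ => (actA_X_isHomogeneous ρ σ v).neg)
  simpa [htc] using this

lemma X_pow_card_mem (v : τ) :
    (X v : MvPolynomial τ F) ^ (Fintype.card G) ∈ hilbertIdeal ρ := by
  set n := Fintype.card G with hn
  set Q : Polynomial (MvPolynomial τ F) := ∏ σ : G, (Polynomial.X - Polynomial.C (actA ρ σ (X v)))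
    with hQ
  have hmonic : Q.Monic := Polynomial.monic_prod_of_monic _ _
    (fun σ _ => Polynomial.monic_X_sub_C _)
  have hdeg : Q.natDegree = n := by
    rw [hQ, Polynomial.natDegree_prod]
    · simp [Polynomial.natDegree_X_sub_C, hn]
    · intro σ _
      exact Polynomial.X_sub_C_ne_zero _
  have heval : Polynomial.eval (X v : MvPolynomial τ F) Q = 0 := by
    rw [hQ, Polynomial.eval_prod]
    apply Finset.prod_eq_zero (Finset.mem_univ (1 : G))
    rw [Polynomial.eval_sub, Polynomial.eval_X, Polynomial.eval_C]
    rw [show actA (F := F) ρ (1 : G) (X v) = X v by rw [actA_one]; rfl]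
    exact sub_self _
  have hsum := Polynomial.eval_eq_sum_range (p := Q) (x := (X v : MvPolynomial τ F))
  rw [heval, hdeg, Finset.sum_range_succ] at hsum
  have hlead : Q.coeff n = 1 := by
    have := hmonic.leadingCoeff
    rwa [Polynomial.leadingCoeff, hdeg] at this
  rw [hlead, one_mul] at hsum
  have hX : (X v : MvPolynomial τ F) ^ n = - ∑ i ∈ Finset.range n, Q.coeff i * X v ^ i := by
    linear_combination -hsum
  rw [hX]
  apply Submodule.neg_mem
  apply Ideal.sum_mem
  intro i hi
  rw [Finset.mem_range] at hi
  have hgen : Q.coeff i ∈ {f : MvPolynomial τ F |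
      (∃ d, 0 < d ∧ f.IsHomogeneous d) ∧ IsInv ρ f} := by
    constructor
    · exact ⟨n - i, by omega, coeff_prod_isHomogeneous ρ v i (by omega)⟩
    · exact coeff_prod_isInv ρ v i
  rw [mul_comm]
  exact Ideal.mul_mem_left _ _ (Ideal.subset_span hgen)

lemma homog_mem_of_large (f : MvPolynomial τ F) (dd : ℕ) (hf : f.IsHomogeneous dd)
    (hdd : Fintype.card G * Fintype.card τ < dd) : f ∈ hilbertIdeal ρ := by
  rw [← support_sum_monomial_coeff f]
  apply Ideal.sum_mem
  intro a ha
  have hdeg : a.degree = dd := by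
    rw [Finsupp.degree_eq_weight_one]
    exact hf (mem_support_iff.mp ha)
  have hex : ∃ v : τ, Fintype.card G ≤ a v := by
    by_contra hno
    push_neg at hno
    have h1 : a.degree ≤ ∑ v : τ, a v := by
      rw [Finsupp.degree]
      exact Finset.sum_le_sum_of_subset (Finset.subset_univ _)
    have h2 : ∑ v : τ, a v ≤ ∑ _v : τ, (Fintype.card G - 1) := by
      apply Finset.sum_le_sum
      intro v _
      have := hno v
      omega
    rw [Finset.sum_const, Finset.card_univ, smul_eq_mul] at h2
    have : Fintype.card τ * (Fintype.card G - 1) ≤ Fintype.card G * Fintype.card τ := by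
      cases Nat.eq_zero_or_pos (Fintype.card G) with
      | inl h => simp [h]
      | inr h => calc Fintype.card τ * (Fintype.card G - 1) ≤ Fintype.card τ * Fintype.card G :=
                  Nat.mul_le_mul_left _ (by omega)
                 _ = Fintype.card G * Fintype.card τ := Nat.mul_comm _ _
    omega
  obtain ⟨v, hv⟩ := hex
  have hfix : (a - Finsupp.single v (Fintype.card G)) + Finsupp.single v (Fintype.card G) = a := by
    ext j
    rw [Finsupp.add_apply, Finsupp.tsub_apply]
    by_cases hjk : j = v
    · subst hjk; simp only [Finsupp.single_eq_same]; omega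
    · simp [Finsupp.single_eq_of_ne' (Ne.symm hjk)]
  have hmono : (monomial a (coeff a f) : MvPolynomial τ F) =
      monomial (a - Finsupp.single v (Fintype.card G)) (coeff a f) * (X v) ^ (Fintype.card G) := by
    rw [X_pow_eq_monomial, monomial_mul, mul_one, hfix]
  rw [hmono]
  exact Ideal.mul_mem_left _ _ (X_pow_card_mem ρ v)

end UB

/-- In the modular case (`char F = p > 0` divides `|G|`), for a
faithful `G`-module `V` the top degree of the vector coinvariants grows
unboundedly: `lim_{m→∞} topdeg F[V^m]_G = ∞`. -/
theorem topDeg_glPow_tendsto_atTop [Fintype G] (p : ℕ) [CharP F p] (hp : p ≠ 0)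
    (hdvd : p ∣ Fintype.card G) (ρ : G →* (Matrix ι ι F)ˣ)
    (hfaithful : Function.Injective ρ) :
    Filter.Tendsto (fun m : ℕ => topDeg (glPow ρ m)) Filter.atTop Filter.atTop := by
  classical
  have hppr : p.Prime := by
    cases CharP.char_is_prime_or_zero F p with
    | inl h => exact h
    | inr h => exact absurd h hp
  haveI hfact : Fact p.Prime := ⟨hppr⟩
  obtain ⟨g, hg⟩ := exists_prime_orderOf_dvd_card p hdvd
  have hg1 : g ≠ 1 := by
    intro h
    rw [h, orderOf_one] at hg
    exact hppr.one_lt.ne' hg.symm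
  have hne : Nonempty ι := by
    by_contra hni
    haveI : IsEmpty ι := not_nonempty_iff.mp hni
    haveI : Subsingleton (Matrix ι ι F) :=
      ⟨fun a b => by ext i j; exact (IsEmpty.false i).elim⟩
    exact hg1 (hfaithful (Units.ext (Subsingleton.elim _ _)))
  haveI hne2 : Nonempty ι := hne
  set N : Matrix ι ι F := (ρ g : Matrix ι ι F) with hN
  have hgp : g ^ p = 1 := by rw [← hg]; exact pow_orderOf_eq_one g
  have hNp : N ^ p = 1 := by
    have h1 : (ρ g) ^ p = 1 := by rw [← map_pow, hgp, map_one]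
    calc N ^ p = ((ρ g ^ p : (Matrix ι ι F)ˣ) : Matrix ι ι F) := by
          rw [Units.val_pow_eq_pow_val]
      _ = 1 := by rw [h1, Units.val_one]
  have hN1 : N ≠ 1 := by
    intro h
    apply hg1
    apply hfaithful
    apply Units.ext
    rw [map_one, Units.val_one, ← hN, h]
  have hnil : (N - 1) ^ p = 0 := by
    have hsub := sub_pow_char_of_commute (p := p) (x := N) (y := 1) (h := Commute.one_right N)
    rw [hsub, hNp, one_pow, sub_self]
  have hNsub : N - 1 ≠ 0 := sub_ne_zero.mpr hN1
  obtain ⟨i1, j1, hij⟩ : ∃ i j, (N - 1) i j ≠ 0 := by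
    by_contra hno
    push_neg at hno
    exact hNsub (by ext i j; simpa using hno i j)
  have hw0 : (N - 1).mulVec (Pi.single j1 1) ≠ 0 := by
    intro h
    have h2 := congrFun h i1
    rw [Matrix.mulVec_single] at h2
    simp only [mul_one, Pi.zero_apply] at h2
    exact hij (by simpa using h2)
  have hPex : ∃ jj : ℕ, ((N - 1) ^ (jj + 1)).mulVec (Pi.single j1 1) = 0 :=
    ⟨p - 1, by rw [show p - 1 + 1 = p from by have := hppr.two_le; omega, hnil,
      Matrix.zero_mulVec]⟩
  set k := Nat.find hPex with hk
  have hspec : ((N - 1) ^ (k + 1)).mulVec (Pi.single j1 1) = 0 := Nat.find_spec hPex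
  have hkpos : 0 < k := by
    rcases Nat.eq_zero_or_pos k with h0 | h
    · exfalso
      apply hw0
      have := hspec
      rw [h0, zero_add, pow_one] at this
      exact this
    · exact h
  have hmin : ((N - 1) ^ k).mulVec (Pi.single j1 1) ≠ 0 := by
    have hm := Nat.find_min hPex (show k - 1 < k from by omega)
    intro h
    apply hm
    rw [show k - 1 + 1 = k from by omega]
    exact h
  set dv : ι → F := ((N - 1) ^ k).mulVec (Pi.single j1 1) with hdv
  set ev : ι → F := ((N - 1) ^ (k - 1)).mulVec (Pi.single j1 1) with hev
  have hde : (N - 1).mulVec ev = dv := by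
    rw [hev, Matrix.mulVec_mulVec, ← pow_succ', show k - 1 + 1 = k from by omega]
  have hdd0 : (N - 1).mulVec dv = 0 := by
    rw [hdv, Matrix.mulVec_mulVec, ← pow_succ']
    exact hspec
  have hNfix : N.mulVec dv = dv := by
    have hNr : N = (N - 1) + 1 := (sub_add_cancel N 1).symm
    rw [hNr, Matrix.add_mulVec, hdd0, Matrix.one_mulVec, zero_add]
  have hNev : N.mulVec ev = ev + dv := by
    have hNr : N = (N - 1) + 1 := (sub_add_cancel N 1).symm
    rw [hNr, Matrix.add_mulVec, hde, Matrix.one_mulVec]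
    exact add_comm _ _
  obtain ⟨i0, hi0⟩ : ∃ i, dv i ≠ 0 := Function.ne_iff.mp hmin
  -- the main lower bound
  have hmain : ∀ m : ℕ, m * (p - 1) ≤ topDeg (glPow ρ m) := by
    intro m
    have hblock : ∀ σ : G, ((glPow ρ m σ : (Matrix (ι × Fin m) (ι × Fin m) F)ˣ) :
        Matrix (ι × Fin m) (ι × Fin m) F)
        = Matrix.blockDiagonal (fun _ => ((ρ σ : (Matrix ι ι F)ˣ) : Matrix ι ι F)) :=
      fun σ => rfl
    set b : ι × Fin m → MvPolynomial (Fin m) F := fun v => dv v.1 • X v.2 with hb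
    set Mb : Matrix (ι × Fin m) (ι × Fin m) F :=
      ((glPow ρ m g : (Matrix (ι × Fin m) (ι × Fin m) F)ˣ) : Matrix (ι × Fin m) (ι × Fin m) F)
      with hMb
    have hMbapp : ∀ i k j l, Mb (i, k) (j, l) = if k = l then N i j else 0 := by
      intro i k j l
      rw [hMb, hblock g, Matrix.blockDiagonal_apply]
    have hmv : ∀ i : ι, ∑ j, N i j * dv j = dv i := by
      intro i
      have := congrFun hNfix i
      simpa [Matrix.mulVec, dotProduct] using this
    have hmv2 : ∀ i : ι, ∑ j, N i j * ev j = ev i + dv i := by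
      intro i
      have := congrFun hNev i
      simpa [Matrix.mulVec, dotProduct] using this
    have H1 : ∀ v, ∑ w, Mb v w • b w = b v := by
      rintro ⟨i, k⟩
      rw [Fintype.sum_prod_type]
      have hterm : ∀ j l, Mb (i, k) (j, l) • b (j, l)
          = if k = l then N i j • (dv j • X l) else 0 := by
        intro j l
        rw [hMbapp, hb]
        by_cases h : k = l <;> simp [h]
      simp_rw [hterm]
      have hinner : ∀ j, (∑ l, if k = l then N i j • (dv j • (X l : MvPolynomial (Fin m) F))
          else 0) = N i j • (dv j • X k) := by
        intro j
        rw [Finset.sum_ite_eq]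
        all_goals rw [if_pos (Finset.mem_univ k)]
      simp_rw [hinner, smul_smul, ← Finset.sum_smul, hmv i]
      rfl
    have H2 : ∀ k₀ : Fin m, ∀ v, (C (∑ w, Mb v w * (if w.2 = k₀ then ev w.1 else 0)) :
        MvPolynomial (Fin m) F)
        = C (if v.2 = k₀ then ev v.1 else 0) + pderiv k₀ (b v) := by
      intro k₀ ⟨i, k⟩
      have hsum : (∑ w : ι × Fin m, Mb (i, k) w * (if w.2 = k₀ then ev w.1 else 0))
          = if k = k₀ then ev i + dv i else 0 := by
        rw [Fintype.sum_prod_type]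
        have hterm : ∀ j l, Mb (i, k) (j, l) * (if l = k₀ then ev j else 0)
            = if k = l then (if l = k₀ then N i j * ev j else 0) else 0 := by
          intro j l
          rw [hMbapp]
          by_cases h : k = l <;> by_cases h2 : l = k₀ <;> simp [h, h2]
        simp_rw [hterm]
        have hinner : ∀ j, (∑ l, if k = l then (if l = k₀ then N i j * ev j else 0) else 0)
            = if k = k₀ then N i j * ev j else 0 := by
          intro j
          rw [Finset.sum_ite_eq]
          all_goals rw [if_pos (Finset.mem_univ k)]
        simp_rw [hinner]
        by_cases h : k = k₀
        · simp only [h, if_true]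
          exact hmv2 i
        · simp [h]
      have hbv : b (i, k) = dv i • X k := rfl
      rw [hsum, hbv]
      by_cases h : k = k₀
      · subst h
        rw [if_pos rfl, if_pos rfl]
        have hpd : pderiv k ((dv i • X k : MvPolynomial (Fin m) F)) = C (dv i) := by
          rw [Derivation.map_smul, pderiv_X, Pi.single_eq_same, smul_eq_C_mul, mul_one]
        rw [hpd, map_add]
      · rw [if_neg h, if_neg h]
        have hpd : pderiv k₀ ((dv i • X k : MvPolynomial (Fin m) F)) = 0 := by
          rw [Derivation.map_smul, pderiv_X, Pi.single_eq_of_ne h, smul_zero]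
        rw [hpd]
        simp
    have hgen : ∀ f₀ ∈ {f : MvPolynomial (ι × Fin m) F |
        (∃ d, 0 < d ∧ f.IsHomogeneous d) ∧ IsInv (glPow ρ m) f},
        aeval b f₀ ∈ Ideal.span (Set.range fun kk : Fin m =>
          (X kk : MvPolynomial (Fin m) F) ^ p) := by
      rintro f₀ ⟨⟨dd, hdd, hhom⟩, hinv⟩
      have hfix : substM Mb f₀ = f₀ := by
        have h1 := hinv g⁻¹
        rw [show polyAct (glPow ρ m) g⁻¹ f₀ = substM Mb f₀ from by
          unfold polyAct substM
          rw [inv_inv]] at h1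
        exact h1
      have hpd : ∀ k₀ : Fin m, pderiv k₀ (aeval b f₀) = 0 :=
        fun k₀ => key_fixed Mb b (fun w => if w.2 = k₀ then ev w.1 else 0) k₀ H1 (H2 k₀) f₀ hfix
      have hhom2 : (aeval b f₀).IsHomogeneous dd := by
        have := hhom.aeval b (n := 1) (fun v => by
          show (dv v.1 • (X v.2 : MvPolynomial (Fin m) F)).IsHomogeneous 1
          rw [smul_eq_C_mul]
          exact isHomogeneous_C_mul_X _ _)
        simpa using this
      apply mem_span_Xpow
      intro a ha
      have hne0 : a ≠ 0 := by
        intro h0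
        apply mem_support_iff.mp ha
        apply hhom2.coeff_eq_zero
        rw [h0]
        simp only [map_zero]
        omega
      obtain ⟨kk, hkk⟩ := Finsupp.ne_iff.mp hne0
      refine ⟨kk, Nat.le_of_dvd ?_ (dvd_of_pderiv_zero p (aeval b f₀) kk (hpd kk) a ha)⟩
      simp only [Finsupp.coe_zero, Pi.zero_apply] at hkk
      omega
    have hHle : ∀ f ∈ hilbertIdeal (glPow ρ m),
        aeval b f ∈ Ideal.span (Set.range fun kk : Fin m =>
          (X kk : MvPolynomial (Fin m) F) ^ p) := by
      intro f hf
      have hle : hilbertIdeal (glPow ρ m) ≤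
          Ideal.comap (aeval b : MvPolynomial (ι × Fin m) F →ₐ[F]
            MvPolynomial (Fin m) F).toRingHom
            (Ideal.span (Set.range fun kk : Fin m => (X kk : MvPolynomial (Fin m) F) ^ p)) := by
        apply Ideal.span_le.mpr
        intro f₀ hf₀
        exact Ideal.mem_comap.mpr (hgen f₀ hf₀)
      exact Ideal.mem_comap.mp (hle hf)
    -- the witness
    set W : MvPolynomial (ι × Fin m) F := ∏ kk : Fin m, (X (i0, kk)) ^ (p - 1) with hW
    have hWhom : W.IsHomogeneous (m * (p - 1)) := by
      have := MvPolynomial.IsHomogeneous.prod Finset.univ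
        (fun kk : Fin m => (X (i0, kk) : MvPolynomial (ι × Fin m) F) ^ (p - 1))
        (fun _ => p - 1) (fun kk _ => isHomogeneous_X_pow _ _)
      simpa [Finset.sum_const, Finset.card_univ, mul_comm] using this
    have haW : aeval b W = monomial (∑ kk : Fin m, Finsupp.single kk (p - 1))
        ((dv i0 ^ (p - 1)) ^ m) := by
      rw [hW, map_prod]
      have h1 : ∀ kk : Fin m, aeval b ((X (i0, kk) : MvPolynomial (ι × Fin m) F) ^ (p - 1))
          = C (dv i0 ^ (p - 1)) * (X kk : MvPolynomial (Fin m) F) ^ (p - 1) := by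
        intro kk
        rw [map_pow, aeval_X]
        rw [show b (i0, kk) = dv i0 • X kk from rfl]
        rw [smul_eq_C_mul, mul_pow, ← map_pow]
      simp_rw [h1]
      rw [Finset.prod_mul_distrib, Finset.prod_const, Finset.card_univ, Fintype.card_fin,
        ← map_pow, prod_X_pow_eq_monomial', C_mul_monomial, mul_one]
    have hWnotH : W ∉ hilbertIdeal (glPow ρ m) := by
      intro hmem
      have hin := hHle W hmem
      rw [haW] at hin
      apply monomial_not_mem_span_Xpow p (∑ kk : Fin m, Finsupp.single kk (p - 1))
        (fun kk => ?_) ((dv i0 ^ (p - 1)) ^ m)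
        (pow_ne_zero _ (pow_ne_zero _ hi0)) hin
      have happ : (∑ kk' : Fin m, Finsupp.single kk' (p - 1)) kk = p - 1 := by
        rw [Finsupp.finset_sum_apply]
        rw [Finset.sum_eq_single kk]
        · simp
        · intro b' _ hb'
          exact Finsupp.single_eq_of_ne' hb'
        · intro hnot
          exact absurd (Finset.mem_univ kk) hnot
      rw [happ]
      have := hppr.two_le
      omega
    have hmem2 : m * (p - 1) ∈ {d : ℕ | ∃ f : MvPolynomial (ι × Fin m) F,
        f.IsHomogeneous d ∧ f ∉ hilbertIdeal (glPow ρ m)} := ⟨W, hWhom, hWnotH⟩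
    have hbdd : BddAbove {d : ℕ | ∃ f : MvPolynomial (ι × Fin m) F,
        f.IsHomogeneous d ∧ f ∉ hilbertIdeal (glPow ρ m)} := by
      refine ⟨Fintype.card G * Fintype.card (ι × Fin m), ?_⟩
      rintro dd ⟨f, hf1, hf2⟩
      by_contra hlt
      push_neg at hlt
      exact hf2 (homog_mem_of_large (glPow ρ m) f dd hf1 hlt)
    exact le_csSup hbdd hmem2
  apply Filter.tendsto_atTop_mono (fun m : ℕ => ?_) Filter.tendsto_id
  calc (m : ℕ) = m * 1 := (mul_one m).symm
    _ ≤ m * (p - 1) := Nat.mul_le_mul_left m (by have := hppr.two_le; omega)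
    _ ≤ topDeg (glPow ρ m) := hmain m
end
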